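/- Let S be a Cohen–Macaulay Noetherian ring and let I be an unmixed ideal of S of height c ≥ 1 that is generically a complete intersection. Then ht(F_c(I)) ≥ c + 1, and consequently I^(m) : F_c(I)^t = I^(m) for every positive integer m and every positive integer t, where F_c(I) is the c-th Fitting ideal of I regarded as an S-module. -/

import Mathlib

set_option maxHeartbeats 1000000


open Ideal Filter

universe u

/-- The `m`-th symbolic power of an ideal `I`: the intersection, over all associated primes `p`
of `S ⧸ I`, of the contractions of `I ^ m` extended to the localization at `p`. -/
noncomputable def symbolicPower {S : Type*} [CommRing S] (I : Ideal S) (m : ℕ) : Ideal S :=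
  ⨅ p : associatedPrimes S (S ⧸ I),
    letI : p.1.IsPrime := p.2.isPrime
    ((I ^ m).map (algebraMap S (Localization.AtPrime p.1))).comap
      (algebraMap S (Localization.AtPrime p.1))

/-- The height of an ideal: the infimum of the heights of the primes containing it. -/
noncomputable def idealHeight {S : Type*} [CommRing S] (I : Ideal S) : ℕ∞ :=
  ⨅ (p : PrimeSpectrum S) (_ : I ≤ p.asIdeal), Order.height p

/-- An ideal is unmixed of height `c` if it has height `c` and every associated prime of `S ⧸ I`
has height `c`. -/
def IsUnmixedOfHeight {S : Type*} [CommRing S] (I : Ideal S) (c : ℕ) : Prop :=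
  idealHeight I = (c : ℕ∞) ∧ ∀ p ∈ associatedPrimes S (S ⧸ I), idealHeight p = (c : ℕ∞)

/-- An ideal `I` is generically a complete intersection if, for every associated prime `p` of
`S ⧸ I`, the extension of `I` to the localization at `p` is generated by a regular sequence. -/
def IsGenericallyCI {S : Type*} [CommRing S] (I : Ideal S) : Prop :=
  ∀ p : associatedPrimes S (S ⧸ I),
    letI : p.1.IsPrime := p.2.isPrime
    ∃ rs : List (Localization.AtPrime p.1),
      RingTheory.Sequence.IsRegular (Localization.AtPrime p.1) rs ∧
      Ideal.ofList rs = I.map (algebraMap S (Localization.AtPrime p.1))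

/-- The depth of a local ring: the supremum of lengths of regular sequences contained in the
maximal ideal. -/
noncomputable def localDepth (R : Type*) [CommRing R] [IsLocalRing R] : ℕ∞ :=
  ⨆ rs : {rs : List R // (∀ x ∈ rs, x ∈ IsLocalRing.maximalIdeal R) ∧
      RingTheory.Sequence.IsRegular R rs}, (rs.1.length : ℕ∞)

/-- A ring is Cohen-Macaulay if the localization at every prime ideal has depth equal to its
Krull dimension. -/
def IsCohenMacaulayRing (S : Type*) [CommRing S] : Prop :=
  ∀ (p : Ideal S) (_hp : p.IsPrime),
    (localDepth (Localization.AtPrime p) : WithBot ℕ∞) = ringKrullDim (Localization.AtPrime p)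

/-- The `j`-th Fitting ideal of a module `M`: the ideal generated by the `(n - j)`-minors of a
presentation matrix coming from any generating family of size `n`. -/
noncomputable def fittingIdeal (S : Type*) [CommRing S] (M : Type*) [AddCommGroup M]
    [Module S M] (j : ℕ) : Ideal S :=
  ⨆ (n : ℕ) (g : Fin n → M) (_ : Submodule.span S (Set.range g) = ⊤),
    Ideal.span { d : S | ∃ (r : Fin (n - j) → Fin n → S) (ι : Fin (n - j) → Fin n),
      (∀ k, ∑ i, r k i • g i = 0) ∧ d = Matrix.det (Matrix.of fun k l => r l (ι k)) }


section Aux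
variable {S : Type u} [CommRing S]

-- L1: contraction of a prime of the localization lies under q
lemma aux_comap_le {q : Ideal S} [q.IsPrime] (P : Ideal (Localization.AtPrime q))
    (hP : P.IsPrime) : P.comap (algebraMap S (Localization.AtPrime q)) ≤ q := by
  intro x hx
  by_contra hxq
  exact hP.ne_top (Ideal.eq_top_of_isUnit_mem _ hx
    (IsLocalization.map_units (M := q.primeCompl) _ ⟨x, hxq⟩))

-- helper: unit times element
lemma aux_unit_mem {R : Type*} [CommRing R] {J : Ideal R} {u z : R} (hu : IsUnit u)
    (h : z * u ∈ J) : z ∈ J := by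
  obtain ⟨v, hv⟩ := hu.exists_right_inv
  have : z * u * v ∈ J := J.mul_mem_right v h
  rwa [mul_assoc, hv, mul_one] at this

-- L3: radical pullback
lemma aux_pow_mem {I q : Ideal S} [q.IsPrime]
    (hmin : ∀ p : Ideal S, p.IsPrime → I ≤ p → p ≤ q → p = q)
    {y : S} (hy : y ∈ q) : ∃ n : ℕ, ∃ s ∉ q, s * y ^ n ∈ I := by
  classical
  set L := Localization.AtPrime q
  have hrad : algebraMap S L y ∈ (I.map (algebraMap S L)).radical := by
    rw [Ideal.radical_eq_sInf]
    refine Ideal.mem_sInf.2 ?_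
    rintro P ⟨hle, hP⟩
    have hcom : P.comap (algebraMap S L) = q := by
      refine hmin _ (hP.comap _) ?_ (aux_comap_le P hP)
      exact Ideal.map_le_iff_le_comap.1 hle
    have : P = Ideal.map (algebraMap S L) q :=
      (IsLocalization.map_comap q.primeCompl L P).symm.trans (by rw [Ideal.under_def, hcom])
    exact this ▸ Ideal.mem_map_of_mem _ hy
  obtain ⟨n, hn⟩ := hrad
  rw [← map_pow] at hn
  obtain ⟨⟨⟨a, ha⟩, ⟨s, hs⟩⟩, h⟩ := (IsLocalization.mem_map_algebraMap_iff q.primeCompl L).1 hn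
  simp only at h
  rw [← RingHom.map_mul] at h
  obtain ⟨cc, hc⟩ := (IsLocalization.eq_iff_exists q.primeCompl L).1 h
  refine ⟨n, cc * s, fun hmem => ?_, ?_⟩
  · exact (q.primeCompl.mul_mem cc.2 hs : (cc : S) * s ∈ q.primeCompl) hmem
  · have : (cc : S) * (y ^ n * s) ∈ I := by
      rw [hc]; exact I.mul_mem_left _ ha
    have e : (cc : S) * s * y ^ n = (cc : S) * (y ^ n * s) := by ring
    rwa [e]

-- membership in the contraction ideal
lemma aux_mem_sat {I q : Ideal S} [q.IsPrime] {x : S} :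
    x ∈ (I.map (algebraMap S (Localization.AtPrime q))).comap
        (algebraMap S (Localization.AtPrime q)) ↔ ∃ s ∉ q, s * x ∈ I := by
  classical
  set L := Localization.AtPrime q
  constructor
  · intro hx
    obtain ⟨⟨⟨a, ha⟩, ⟨s, hs⟩⟩, h⟩ :=
      (IsLocalization.mem_map_algebraMap_iff q.primeCompl L).1 (Ideal.mem_comap.1 hx)
    simp only at h
    rw [← RingHom.map_mul] at h
    obtain ⟨cc, hc⟩ := (IsLocalization.eq_iff_exists q.primeCompl L).1 h
    refine ⟨cc * s, fun hmem => (q.primeCompl.mul_mem cc.2 hs : (cc:S)*s ∈ q.primeCompl) hmem, ?_⟩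
    have : (cc : S) * (x * s) ∈ I := by rw [hc]; exact I.mul_mem_left _ ha
    have e : (cc : S) * s * x = (cc : S) * (x * s) := by ring
    rwa [e]
  · rintro ⟨s, hs, hsx⟩
    rw [Ideal.mem_comap]
    have h1 : algebraMap S L (s * x) ∈ I.map (algebraMap S L) := Ideal.mem_map_of_mem _ hsx
    rw [RingHom.map_mul] at h1
    refine aux_unit_mem (IsLocalization.map_units (M := q.primeCompl) L ⟨s, hs⟩) ?_
    rwa [mul_comm]

-- L4: q is an associated prime of S/I
lemma aux_assoc [IsNoetherianRing S] {I q : Ideal S} [hq : q.IsPrime] (hIq : I ≤ q)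
    (hmin : ∀ p : Ideal S, p.IsPrime → I ≤ p → p ≤ q → p = q) :
    q ∈ associatedPrimes S (S ⧸ I) := by
  classical
  set L := Localization.AtPrime q
  set I' : Ideal S := (I.map (algebraMap S L)).comap (algebraMap S L) with hI'
  have hII' : I ≤ I' := fun x hx => aux_mem_sat.2 ⟨1, q.primeCompl.one_mem, by rwa [one_mul]⟩
  have hI'q : I' ≤ q := by
    intro x hx
    obtain ⟨s, hs, hsx⟩ := aux_mem_sat.1 hx
    exact ((hq.mem_or_mem (hIq hsx)).resolve_left hs)
  have hrad : I'.radical = q := by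
    apply le_antisymm
    · rintro y ⟨n, hn⟩
      obtain ⟨s, hs, hsy⟩ := aux_mem_sat.1 hn
      exact hq.mem_of_pow_mem n ((hq.mem_or_mem (hIq hsy)).resolve_left hs)
    · intro y hy
      obtain ⟨n, s, hs, hsy⟩ := aux_pow_mem (I := I) (q := q) hmin hy
      exact ⟨n, aux_mem_sat.2 ⟨s, hs, hsy⟩⟩
  have hne : I' ≠ ⊤ := fun h => hq.ne_top (top_le_iff.1 (h ▸ hI'q))
  have hprimary : I'.IsPrimary := by
    rw [Ideal.isPrimary_iff]
    refine ⟨hne, fun {a b} hab => ?_⟩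
    rw [or_iff_not_imp_right, hrad]
    intro hb
    obtain ⟨s, hs, hsab⟩ := aux_mem_sat.1 hab
    refine aux_mem_sat.2 ⟨s * b, fun hmem => ?_, ?_⟩
    · exact ((hq.mem_or_mem hmem).resolve_left hs) |> hb
    · have e : s * b * a = s * (a * b) := by ring
      rwa [e]
  -- get an associated prime of S/I', which must be q
  haveI : Nontrivial (S ⧸ I') := Ideal.Quotient.nontrivial_iff.mpr hne
  obtain ⟨P, hP⟩ := associatedPrimes.nonempty S (S ⧸ I')
  have hPq : P = q := by rw [hP.eq_radical hprimary, hrad]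
  obtain ⟨hPprime, x, hx⟩ := hPq ▸ hP
  obtain ⟨x₀, rfl⟩ := Ideal.Quotient.mk_surjective x
  -- I' is finitely generated: find a single s with s * I' ≤ I
  obtain ⟨T, hT⟩ := (isNoetherianRing_iff_ideal_fg S).1 ‹IsNoetherianRing S› I'
  choose sel hsel1 hsel2 using fun t (ht : t ∈ (T : Set S)) =>
    aux_mem_sat.1 (hT ▸ Ideal.subset_span ht : t ∈ I')
  classical
  set s : S := ∏ t ∈ T.attach, sel t.1 t.2 with hsdef
  have hsq : s ∉ q := fun hmem => by
    obtain ⟨t, -, ht⟩ := (Ideal.IsPrime.prod_mem_iff).1 hmem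
    exact hsel1 t.1 t.2 ht
  have hsI : ∀ y ∈ I', s * y ∈ I := by
    intro y hy
    rw [← hT] at hy
    induction hy using Submodule.span_induction with
    | mem z hz =>
        have : s = sel z hz * ∏ t ∈ T.attach.erase ⟨z, hz⟩, sel t.1 t.2 := by
          rw [hsdef, ← Finset.mul_prod_erase T.attach _ (Finset.mem_attach T ⟨z, hz⟩)]
        rw [this, mul_assoc, mul_comm (∏ t ∈ T.attach.erase ⟨z,hz⟩, sel t.1 t.2) z, ← mul_assoc]
        exact I.mul_mem_right _ (hsel2 z hz)
    | zero => simpa using I.zero_mem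
    | add a b _ _ ha hb => rw [mul_add]; exact I.add_mem ha hb
    | smul r a _ ha =>
        rw [smul_eq_mul, mul_comm r a, ← mul_assoc]; exact I.mul_mem_right r ha
  -- now the element s * x₀ works for S/I
  have hkey : ∀ (J : Ideal S) (z y : S),
      (y ∈ (⊥ : Submodule S (S ⧸ J)).colon {Ideal.Quotient.mk J z}) ↔ y * z ∈ J := by
    intro J z y
    rw [Submodule.mem_colon_singleton, Submodule.mem_bot]
    have e : y • (Ideal.Quotient.mk J z) = Ideal.Quotient.mk J (y * z) := rfl
    rw [e, Ideal.Quotient.eq_zero_iff_mem]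
  refine ⟨hq, Ideal.Quotient.mk I (s * x₀), ?_⟩
  rw [hx]
  congr 1
  apply Ideal.ext
  intro y
  rw [hkey, hkey]
  constructor
  · intro hy
    have : s * (y * x₀) ∈ I := hsI _ hy
    have e : y * (s * x₀) = s * (y * x₀) := by ring
    rwa [e]
  · intro hy
    refine (aux_mem_sat.2 ⟨s, hsq, ?_⟩)
    have e : s * (y * x₀) = y * (s * x₀) := by ring
    rwa [e]

-- L6: regular sequences in the localization have length at most the height
lemma aux_len_le (hCM : IsCohenMacaulayRing S) {q : Ideal S} [hq : q.IsPrime]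
    {cnat : ℕ} (hht : Order.height (⟨q, hq⟩ : PrimeSpectrum S) ≤ (cnat : ℕ∞))
    (rs : List (Localization.AtPrime q))
    (hmem : ∀ x ∈ rs, x ∈ IsLocalRing.maximalIdeal (Localization.AtPrime q))
    (hreg : RingTheory.Sequence.IsRegular (Localization.AtPrime q) rs) :
    rs.length ≤ cnat := by
  have h1 : (rs.length : ℕ∞) ≤ localDepth (Localization.AtPrime q) :=
    le_iSup (fun rs : {rs : List (Localization.AtPrime q) //
        (∀ x ∈ rs, x ∈ IsLocalRing.maximalIdeal (Localization.AtPrime q)) ∧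
        RingTheory.Sequence.IsRegular (Localization.AtPrime q) rs} =>
      (rs.1.length : ℕ∞)) ⟨rs, hmem, hreg⟩
  have h2 := hCM q hq
  have h3 : ringKrullDim (Localization.AtPrime q) ≤
      ((Order.height (⟨q, hq⟩ : PrimeSpectrum S) : ℕ∞) : WithBot ℕ∞) := by
    rw [ringKrullDim, Order.krullDim_eq_iSup_length, WithBot.coe_le_coe]
    refine iSup_le fun p => ?_
    set f : PrimeSpectrum (Localization.AtPrime q) → PrimeSpectrum S :=
      fun P => ⟨P.asIdeal.comap (algebraMap S (Localization.AtPrime q)),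
        P.isPrime.comap _⟩ with hf
    have hinj : Function.Injective f := by
      intro P P' h
      have := congrArg (fun r => Ideal.map (algebraMap S (Localization.AtPrime q)) r.asIdeal) h
      simpa only [hf, IsLocalization.map_comap q.primeCompl (Localization.AtPrime q),
        PrimeSpectrum.ext_iff] using this
    have hstrict : StrictMono f := fun P P' h =>
      lt_of_le_of_ne (Ideal.comap_mono h.le) (fun e => h.ne (hinj e))
    have hlast : (p.map f hstrict).last ≤ (⟨q, hq⟩ : PrimeSpectrum S) := by
      rw [LTSeries.last_map]
      exact aux_comap_le _ (p.last).isPrime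
    have := Order.length_le_height hlast
    simpa using this
  have hfin : ((rs.length : ℕ∞) : WithBot ℕ∞) ≤ ((cnat : ℕ∞) : WithBot ℕ∞) := by
    calc ((rs.length : ℕ∞) : WithBot ℕ∞) ≤ (localDepth (Localization.AtPrime q) : WithBot ℕ∞) :=
          WithBot.coe_le_coe.2 h1
      _ = ringKrullDim (Localization.AtPrime q) := h2
      _ ≤ ((Order.height (⟨q, hq⟩ : PrimeSpectrum S) : ℕ∞) : WithBot ℕ∞) := h3
      _ ≤ _ := WithBot.coe_le_coe.2 hht
  exact_mod_cast hfin


-- L7a: exhibiting an element of the Fitting ideal outside q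
lemma aux_fitting_not_mem [IsNoetherianRing S] {I : Ideal S} {q : PrimeSpectrum S}
    {c : ℕ} (a : Fin c → S) (ha : ∀ i, a i ∈ I)
    (hgen : ∀ h ∈ I, ∃ s ∉ q.asIdeal, s * h ∈ Ideal.span (Set.range a)) :
    ∃ d ∈ fittingIdeal S ↥I c, d ∉ q.asIdeal := by
  classical
  obtain ⟨k, h, hh⟩ := Submodule.fg_iff_exists_fin_generating_family.1
    ((isNoetherianRing_iff_ideal_fg S).1 ‹IsNoetherianRing S› I)
  have hhj : ∀ j, h j ∈ I := fun j => hh ▸ Submodule.subset_span (Set.mem_range_self j)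
  choose s hs hsh using fun j => hgen (h j) (hhj j)
  choose b hb using fun j => (Submodule.mem_span_range_iff_exists_fun (R := S)).1 (hsh j)
  have e : c + k - c = k := Nat.add_sub_cancel_left c k
  set g : Fin (c + k) → ↥I :=
    Fin.addCases (fun i => ⟨a i, ha i⟩) (fun j => ⟨h j, hhj j⟩) with hg
  have hspan : Submodule.span S (Set.range g) = ⊤ := by
    apply Submodule.map_injective_of_injective (Submodule.injective_subtype
      (I : Submodule S S))
    rw [Submodule.map_span, Submodule.map_top, Submodule.range_subtype]
    apply le_antisymm
    · rw [Submodule.span_le]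
      rintro x ⟨y, ⟨i, rfl⟩, rfl⟩
      exact (g i).2
    · have hsub : Set.range h ⊆ ↑(Submodule.span S (⇑(Submodule.subtype I) '' Set.range g)) := by
        rintro x ⟨j, rfl⟩
        exact Submodule.subset_span ⟨g (Fin.natAdd c j), ⟨_, rfl⟩, by simp [hg]⟩
      have hle2 := Submodule.span_le.2 hsub
      rwa [hh] at hle2
  set r : Fin (c + k - c) → Fin (c + k) → S :=
    fun j' => Fin.addCases (fun i => - b (Fin.cast e j') i)
      (fun j'' => if j'' = Fin.cast e j' then s (Fin.cast e j') else 0) with hr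
  have hrel : ∀ j', ∑ i, r j' i • g i = 0 := by
    intro j'
    apply Subtype.ext
    have hcoe : ((∑ i, r j' i • g i : ↥I) : S) = ∑ i, r j' i * (g i : S) := by
      rw [← Submodule.coe_subtype, map_sum]
      rfl
    rw [hcoe]
    rw [Fin.sum_univ_add]
    have h1 : ∀ i : Fin c, r j' (Fin.castAdd k i) * (g (Fin.castAdd k i) : S)
        = - b (Fin.cast e j') i * a i := by
      intro i; simp [hr, hg]
    have h2 : ∀ j'' : Fin k, r j' (Fin.natAdd c j'') * (g (Fin.natAdd c j'') : S)
        = if j'' = Fin.cast e j' then s (Fin.cast e j') * h j'' else 0 := by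
      intro j''; simp [hr, hg, ite_mul]
    rw [Finset.sum_congr rfl (fun i _ => h1 i), Finset.sum_congr rfl (fun j'' _ => h2 j'')]
    rw [Finset.sum_ite_eq' Finset.univ (Fin.cast e j')
      (fun j'' => s (Fin.cast e j') * h j'')]
    simp only [Finset.mem_univ, if_true]
    have hbj := hb (Fin.cast e j')
    simp only [smul_eq_mul] at hbj
    rw [ZeroMemClass.coe_zero]
    simp only [neg_mul, Finset.sum_neg_distrib, hbj]
    exact neg_add_cancel _
  set ι : Fin (c + k - c) → Fin (c + k) := fun j' => Fin.natAdd c (Fin.cast e j') with hι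
  have hmat : (Matrix.of fun k' l' => r l' (ι k'))
      = (Matrix.diagonal s).submatrix (finCongr e) (finCongr e) := by
    ext k' l'
    simp only [Matrix.of_apply, Matrix.submatrix_apply, Matrix.diagonal_apply, hr, hι,
      finCongr_apply]
    rw [Fin.addCases_right]
    split_ifs with h1
    · rw [h1]
    · rfl
  refine ⟨Matrix.det (Matrix.of fun k' l' => r l' (ι k')), ?_, ?_⟩
  · have hle : Ideal.span { d : S | ∃ (r : Fin (c + k - c) → Fin (c + k) → S)
        (ι : Fin (c + k - c) → Fin (c + k)),
        (∀ k', ∑ i, r k' i • g i = 0) ∧ d = Matrix.det (Matrix.of fun k' l' => r l' (ι k')) }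
        ≤ fittingIdeal S ↥I c :=
      le_iSup_of_le (c + k) (le_iSup_of_le g (le_iSup_of_le hspan (le_refl _)))
    exact hle (Ideal.subset_span ⟨r, ι, hrel, rfl⟩)
  · rw [hmat, Matrix.det_submatrix_equiv_self, Matrix.det_diagonal]
    intro hmem
    obtain ⟨j, -, hj⟩ := (Ideal.IsPrime.prod_mem_iff (hp := q.isPrime)).1 hmem
    exact hs j hj


-- the main key lemma: at any prime of height at most c, the Fitting ideal is not contained in it
lemma aux_key [IsNoetherianRing S] (hCM : IsCohenMacaulayRing S) {I : Ideal S} {c : ℕ}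
    (hc : 1 ≤ c) (hunm : IsUnmixedOfHeight I c) (hgci : IsGenericallyCI I)
    (q : PrimeSpectrum S) (hq : Order.height q ≤ (c : ℕ∞)) :
    ∃ d ∈ fittingIdeal S ↥I c, d ∉ q.asIdeal := by
  classical
  haveI hqp := q.isPrime
  have hIH : ∀ p : PrimeSpectrum S, I ≤ p.asIdeal → (c : ℕ∞) ≤ Order.height p := by
    intro p hp
    calc (c : ℕ∞) = idealHeight I := hunm.1.symm
      _ ≤ Order.height p := iInf_le_of_le p (iInf_le _ hp)
  by_cases hIq : I ≤ q.asIdeal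
  · -- q contains I; it is then a minimal (hence associated) prime of I
    have hmin : ∀ p : Ideal S, p.IsPrime → I ≤ p → p ≤ q.asIdeal → p = q.asIdeal := by
      intro p hp hIp hpq
      by_contra hne
      have hle : (⟨p, hp⟩ : PrimeSpectrum S) ≤ q := hpq
      have hlt : (⟨p, hp⟩ : PrimeSpectrum S) < q :=
        hle.lt_of_ne (by simpa [PrimeSpectrum.ext_iff] using hne)
      have hfin : Order.height (⟨p, hp⟩ : PrimeSpectrum S) < ⊤ :=
        lt_of_le_of_lt (le_trans (Order.height_mono hle) hq) (by simp)
      have h2 := Order.height_strictMono hlt hfin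
      have h3 := hIH ⟨p, hp⟩ hIp
      exact absurd (lt_of_le_of_lt h3 (lt_of_lt_of_le h2 hq)) (by simp)
    have hassoc : q.asIdeal ∈ associatedPrimes S (S ⧸ I) := aux_assoc hIq hmin
    obtain ⟨rs, hreg, hofList⟩ := hgci ⟨q.asIdeal, hassoc⟩
    have hmapne : Ideal.map (algebraMap S (Localization.AtPrime q.asIdeal)) I ≠ ⊤ := by
      intro htop
      have h1 : (1 : S) ∈ (I.map (algebraMap S (Localization.AtPrime q.asIdeal))).comap
          (algebraMap S (Localization.AtPrime q.asIdeal)) := by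
        rw [htop]; trivial
      obtain ⟨s, hs, hs1⟩ := aux_mem_sat.1 h1
      rw [mul_one] at hs1
      exact hs (hIq hs1)
    have hmem : ∀ x ∈ rs, x ∈ IsLocalRing.maximalIdeal (Localization.AtPrime q.asIdeal) := by
      intro x hx
      have h1 : x ∈ Ideal.ofList rs := Ideal.subset_span hx
      rw [hofList] at h1
      exact IsLocalRing.le_maximalIdeal hmapne h1
    have hlen : rs.length ≤ c := aux_len_le hCM hq rs hmem hreg
    have hxi : ∀ i : Fin rs.length,
        rs.get i ∈ I.map (algebraMap S (Localization.AtPrime q.asIdeal)) := by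
      intro i
      rw [← hofList]
      exact Ideal.subset_span (List.get_mem rs i)
    have hpull := fun i => (IsLocalization.mem_map_algebraMap_iff q.asIdeal.primeCompl
      (Localization.AtPrime q.asIdeal)).1 (hxi i)
    choose w hw using hpull
    set av : Fin c → S := fun i =>
      if h : (i : ℕ) < rs.length then ((w ⟨i, h⟩).1 : S) else 0 with hav
    have haav : ∀ i, av i ∈ I := by
      intro i
      by_cases h : (i : ℕ) < rs.length
      · simpa [hav, h] using (w ⟨i, h⟩).1.2
      · simp [hav, h]
    refine aux_fitting_not_mem av haav ?_
    intro hel hhel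
    have h1 : algebraMap S (Localization.AtPrime q.asIdeal) hel
        ∈ I.map (algebraMap S (Localization.AtPrime q.asIdeal)) := Ideal.mem_map_of_mem _ hhel
    have h2 : I.map (algebraMap S (Localization.AtPrime q.asIdeal)) ≤
        (Ideal.span (Set.range av)).map (algebraMap S (Localization.AtPrime q.asIdeal)) := by
      rw [← hofList]
      refine Ideal.span_le.2 ?_
      intro x hx
      obtain ⟨i, rfl⟩ := List.mem_iff_get.1 hx
      have hu : IsUnit (algebraMap S (Localization.AtPrime q.asIdeal) ((w i).2 : S)) :=
        IsLocalization.map_units _ (w i).2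
      refine aux_unit_mem hu ?_
      rw [hw i]
      refine Ideal.mem_map_of_mem _ (Ideal.subset_span ?_)
      refine ⟨⟨(i : ℕ), lt_of_lt_of_le i.isLt hlen⟩, ?_⟩
      rw [hav]
      simp only [i.isLt, dif_pos]
    exact aux_mem_sat.1 (Ideal.mem_comap.2 (h2 h1))
  · obtain ⟨s₀, hs₀I, hs₀q⟩ := SetLike.not_le_iff_exists.1 hIq
    refine aux_fitting_not_mem (fun _ : Fin c => s₀) (fun _ => hs₀I) ?_
    intro hel hhel
    refine ⟨s₀, hs₀q, ?_⟩
    rw [mul_comm]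
    exact Ideal.mul_mem_left _ hel (Ideal.subset_span ⟨⟨0, hc⟩, rfl⟩)

end Aux

theorem stmt5 {S : Type u} [CommRing S] [IsNoetherianRing S] (hCM : IsCohenMacaulayRing S)
    (I : Ideal S) (c : ℕ) (hc : 1 ≤ c)
    (hunm : IsUnmixedOfHeight I c) (hgci : IsGenericallyCI I) :
    ((c : ℕ∞) + 1) ≤ idealHeight (fittingIdeal S ↥I c) ∧
      ∀ (m t : ℕ), 0 < m → 0 < t →
        Submodule.colon (symbolicPower I m) ((fittingIdeal S ↥I c ^ t : Ideal S) : Set S) = symbolicPower I m := by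
  constructor
  · show ((c : ℕ∞) + 1) ≤ ⨅ (p : PrimeSpectrum S)
      (_ : fittingIdeal S ↥I c ≤ p.asIdeal), Order.height p
    refine le_iInf fun p => le_iInf fun hle => ?_
    by_contra hcon
    push_neg at hcon
    have hple : Order.height p ≤ (c : ℕ∞) :=
      (ENat.lt_add_one_iff (ENat.coe_ne_top c)).1 hcon
    obtain ⟨d, hdF, hdq⟩ := aux_key hCM hc hunm hgci p hple
    exact hdq (hle hdF)
  · intro m t _hm _ht
    apply le_antisymm
    · intro x hx
      rw [symbolicPower]
      refine Submodule.mem_iInf _ |>.2 ?_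
      rintro ⟨p, hp⟩
      haveI hpp : p.IsPrime := hp.isPrime
      have hheight : Order.height (⟨p, hpp⟩ : PrimeSpectrum S) ≤ (c : ℕ∞) := by
        have h1 : idealHeight p = (c : ℕ∞) := hunm.2 p hp
        calc Order.height (⟨p, hpp⟩ : PrimeSpectrum S)
            ≤ idealHeight p := le_iInf fun p' => le_iInf fun hle' =>
              Order.height_mono (show (⟨p, hpp⟩ : PrimeSpectrum S) ≤ p' from hle')
          _ = (c : ℕ∞) := h1
      obtain ⟨d, hdF, hdp⟩ := aux_key hCM hc hunm hgci ⟨p, hpp⟩ hheight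
      have hdt : d ^ t ∈ fittingIdeal S ↥I c ^ t := Ideal.pow_mem_pow hdF t
      have hxd : x * d ^ t ∈ symbolicPower I m := by
        have := Submodule.mem_colon.1 hx _ hdt
        rwa [smul_eq_mul] at this
      have hcomp : symbolicPower I m ≤
          ((I ^ m).map (algebraMap S (Localization.AtPrime p))).comap
            (algebraMap S (Localization.AtPrime p)) :=
        iInf_le (fun p' : associatedPrimes S (S ⧸ I) =>
          letI : p'.1.IsPrime := p'.2.isPrime
          ((I ^ m).map (algebraMap S (Localization.AtPrime p'.1))).comap
            (algebraMap S (Localization.AtPrime p'.1))) ⟨p, hp⟩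
      have hxp : algebraMap S (Localization.AtPrime p) (x * d ^ t)
          ∈ (I ^ m).map (algebraMap S (Localization.AtPrime p)) :=
        Ideal.mem_comap.1 (hcomp hxd)
      rw [RingHom.map_mul] at hxp
      have hu : IsUnit (algebraMap S (Localization.AtPrime p) (d ^ t)) := by
        rw [RingHom.map_pow]
        exact (IsLocalization.map_units (M := p.primeCompl)
          (Localization.AtPrime p) ⟨d, hdp⟩).pow t
      exact Ideal.mem_comap.2 (aux_unit_mem hu hxp)
    · intro x hx
      rw [Submodule.mem_colon]
      intro f hf
      rw [smul_eq_mul]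
      exact Ideal.mul_mem_right f _ hx
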